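/- The cycle C_k on k vertices admits a star edge-coloring with 3 colors if and only if k = 3, k = 4, or k ≥ 6 (equivalently, if and only if k ≠ 5). The 5-cycle C_5 requires 4 colors, so χ'_s(C_5) = 4. -/

import Mathlib

open SimpleGraph

/-- A star edge-coloring: proper (adjacent distinct edges get different colors),
and no path with 4 edges nor 4-cycle uses at most two colors. -/
def IsStarEdgeColoring {V α : Type*} (G : SimpleGraph V) (c : Sym2 V → α) : Prop :=
  (∀ e₁ ∈ G.edgeSet, ∀ e₂ ∈ G.edgeSet, e₁ ≠ e₂ → (∃ v, v ∈ e₁ ∧ v ∈ e₂) → c e₁ ≠ c e₂) ∧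
  (∀ (u v : V) (p : G.Walk u v), p.IsPath → p.length = 4 →
      ¬ ∃ a b : α, ∀ e ∈ p.edges, c e = a ∨ c e = b) ∧
  (∀ (u : V) (p : G.Walk u u), p.IsCycle → p.length = 4 →
      ¬ ∃ a b : α, ∀ e ∈ p.edges, c e = a ∨ c e = b)

/-- The star chromatic index. -/
noncomputable def starChromaticIndex {V : Type*} (G : SimpleGraph V) : ℕ :=
  sInf {k | ∃ c : Sym2 V → Fin k, IsStarEdgeColoring G c}

section Aux

variable {n m : ℕ}

open Fin.CommRing in
lemma cg_adj {u v : Fin (n+3)} : (cycleGraph (n+3)).Adj u v ↔ v = u + 1 ∨ u = v + 1 := by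
  rw [cycleGraph_adj]
  constructor
  · rintro (h | h)
    · right; rw [sub_eq_iff_eq_add] at h; rw [h]; ring
    · left; rw [sub_eq_iff_eq_add] at h; rw [h]; ring
  · rintro (h | h)
    · right; rw [h]; ring
    · left; rw [h]; ring

lemma two_ne' (x : Fin (n+3)) : x + 2 ≠ x := by
  intro h
  have h2 : x + 2 - x = x - x := by rw [h]
  simp at h2
  have e2 : (2 : Fin (n+3)).val = 2 := rfl
  have e0 : (0 : Fin (n+3)).val = 0 := rfl
  rw [Fin.ext_iff] at h2
  omega

open Fin.CommRing in
lemma aao (x : Fin (n+3)) : x + 1 + 1 = x + 2 := by ring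

open Fin.CommRing in
lemma aao3 (x : Fin (n+3)) : x + 2 + 1 = x + 3 := by ring

lemma two_step {a b c : Fin (n+3)} (h1 : (cycleGraph (n+3)).Adj a b)
    (h2 : (cycleGraph (n+3)).Adj b c) (hac : a ≠ c) :
    (b = a + 1 ∧ c = b + 1) ∨ (a = b + 1 ∧ b = c + 1) := by
  rw [cg_adj] at h1 h2
  rcases h1 with h1 | h1 <;> rcases h2 with h2 | h2
  · exact Or.inl ⟨h1, h2⟩
  · exact absurd (add_right_cancel ((h1 ▸ h2 : a + 1 = c + 1))) hac
  · exact absurd (by rw [h1, h2]) hac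
  · exact Or.inr ⟨h1, h2⟩

/-- the edge coloring induced by a pattern on vertices -/
def ec (f : Fin (n+3) → Fin m) : Sym2 (Fin (n+3)) → Fin m :=
  Sym2.lift ⟨fun i j => if j = i + 1 then f i else if i = j + 1 then f j else f 0, by
    intro i j
    dsimp only
    by_cases h1 : j = i + 1 <;> by_cases h2 : i = j + 1
    · exfalso
      exact two_ne' i (by rw [← aao, ← h1, ← h2])
    · have hni : ¬ i = i + 1 + 1 := fun h => two_ne' i (by rw [aao] at h; exact h.symm)
      simp [h1, h2, hni]
    · have hnj : ¬ j = j + 1 + 1 := fun h => two_ne' j (by rw [aao] at h; exact h.symm)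
      simp [h1, h2, hnj]
    · simp [h1, h2]⟩

lemma ec_edge (f : Fin (n+3) → Fin m) (i : Fin (n+3)) : ec f s(i, i+1) = f i := by
  simp [ec]

lemma edge_form {e : Sym2 (Fin (n+3))} (he : e ∈ (cycleGraph (n+3)).edgeSet) :
    ∃ i, e = s(i, i+1) := by
  induction e with
  | _ a b =>
    rw [SimpleGraph.mem_edgeSet, cg_adj] at he
    rcases he with h | h
    · exact ⟨a, by rw [h]⟩
    · exact ⟨b, by rw [h, Sym2.eq_swap]⟩

lemma colors_contra {x0 x1 x2 x3 a b : Fin m} (q01 : x0 ≠ x1) (q12 : x1 ≠ x2) (q23 : x2 ≠ x3)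
    (q : ¬(x0 = x2 ∧ x1 = x3)) (h0 : x0 = a ∨ x0 = b) (h1 : x1 = a ∨ x1 = b)
    (h2 : x2 = a ∨ x2 = b) (h3 : x3 = a ∨ x3 = b) : False := by
  rcases h0 with h0 | h0 <;> rcases h1 with h1 | h1 <;> rcases h2 with h2 | h2 <;>
    rcases h3 with h3 | h3 <;> simp_all

lemma key (f : Fin (n+3) → Fin m)
    (P1 : ∀ i, f i ≠ f (i+1))
    (P2 : ∀ i, ¬(f i = f (i+2) ∧ f (i+1) = f (i+3)))
    {v0 v1 v2 v3 v4 : Fin (n+3)}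
    (h01 : (cycleGraph (n+3)).Adj v0 v1) (h12 : (cycleGraph (n+3)).Adj v1 v2)
    (h23 : (cycleGraph (n+3)).Adj v2 v3) (h34 : (cycleGraph (n+3)).Adj v3 v4)
    (d02 : v0 ≠ v2) (d13 : v1 ≠ v3) (d24 : v2 ≠ v4)
    {a b : Fin m}
    (H : ∀ e ∈ [s(v0,v1), s(v1,v2), s(v2,v3), s(v3,v4)], ec f e = a ∨ ec f e = b) : False := by
  have H0 := H s(v0,v1) (by simp)
  have H1 := H s(v1,v2) (by simp)
  have H2 := H s(v2,v3) (by simp)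
  have H3 := H s(v3,v4) (by simp)
  rcases two_step h01 h12 d02 with ⟨e1, e2⟩ | ⟨e1, e2⟩ <;>
    rcases two_step h12 h23 d13 with ⟨e2', e3⟩ | ⟨e2', e3⟩ <;>
    rcases two_step h23 h34 d24 with ⟨e3', e4⟩ | ⟨e3', e4⟩
  · -- all forward
    have ev2 : v2 = v0 + 2 := by rw [e2, e1, aao]
    have ev3 : v3 = v0 + 3 := by rw [e3, ev2, aao3]
    rw [e1, ec_edge] at H0
    rw [e2, ec_edge] at H1
    rw [e3, ec_edge] at H2
    rw [e4, ec_edge] at H3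
    exact colors_contra (e1 ▸ P1 v0) (e2 ▸ P1 v1) (e3 ▸ P1 v2)
      (by rw [e1, ev2, ev3]; exact P2 v0) H0 H1 H2 H3
  · exact two_ne' v2 (by rw [← aao, ← e3, ← e3'])
  · exact two_ne' v1 (by rw [← aao, ← e2, ← e2'])
  · exact two_ne' v1 (by rw [← aao, ← e2, ← e2'])
  · exact two_ne' v1 (by rw [← aao, ← e2', ← e2])
  · exact two_ne' v1 (by rw [← aao, ← e2', ← e2])
  · exact two_ne' v2 (by rw [← aao, ← e3', ← e3])
  · -- all backward
    have ev2 : v2 = v4 + 2 := by rw [e3', e4, aao]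
    have ev1 : v1 = v4 + 3 := by rw [e2', ev2, aao3]
    rw [e1, Sym2.eq_swap, ec_edge] at H0
    rw [e2, Sym2.eq_swap, ec_edge] at H1
    rw [e3, Sym2.eq_swap, ec_edge] at H2
    rw [e4, Sym2.eq_swap, ec_edge] at H3
    exact colors_contra (e4 ▸ P1 v4) (e3' ▸ P1 v3) (e2' ▸ P1 v2)
      (by rw [e4, ev2, ev1]; exact P2 v4) H3 H2 H1 H0

lemma exists_coloring (f : Fin (n+3) → Fin m)
    (P1 : ∀ i, f i ≠ f (i+1))
    (P2 : ∀ i, ¬(f i = f (i+2) ∧ f (i+1) = f (i+3))) :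
    IsStarEdgeColoring (cycleGraph (n+3)) (ec f) := by
  refine ⟨?_, ?_, ?_⟩
  · intro e1 he1 e2 he2 hne hshare
    obtain ⟨i, rfl⟩ := edge_form he1
    obtain ⟨j, rfl⟩ := edge_form he2
    obtain ⟨w, hw1, hw2⟩ := hshare
    rw [Sym2.mem_iff] at hw1 hw2
    rw [ec_edge, ec_edge]
    rcases hw1 with rfl | rfl <;> rcases hw2 with h | h
    · exact absurd (by rw [h]) hne
    · rw [h]; exact (P1 j).symm
    · rw [← h]; exact P1 i
    · exact absurd (by rw [add_right_cancel h]) hne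
  · intro u v p hp hlen
    cases p with
    | nil => simp at hlen
    | cons h01 p => cases p with
      | nil => simp at hlen
      | cons h12 p => cases p with
        | nil => simp at hlen
        | cons h23 p => cases p with
          | nil => simp at hlen
          | cons h34 p => cases p with
            | cons h45 p => simp [Walk.length_cons] at hlen
            | nil =>
              rw [Walk.isPath_def] at hp
              simp only [Walk.support_cons, Walk.support_nil, List.nodup_cons, List.mem_cons,
                List.mem_singleton, List.not_mem_nil, or_false, List.nodup_nil, and_true] at hp
              push_neg at hp
              rintro ⟨a, b, H⟩
              simp only [Walk.edges_cons, Walk.edges_nil] at H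
              exact key f P1 P2 h01 h12 h23 h34 hp.1.2.1 hp.2.1.2.1 hp.2.2.1.2 H
  · intro u p hp hlen
    cases p with
    | nil => simp at hlen
    | cons h01 p => cases p with
      | nil => simp at hlen
      | cons h12 p => cases p with
        | nil => simp at hlen
        | cons h23 p => cases p with
          | nil => simp at hlen
          | cons h34 p => cases p with
            | cons h45 p => simp [Walk.length_cons] at hlen
            | nil =>
              rw [Walk.isCycle_def] at hp
              obtain ⟨-, -, hnd⟩ := hp
              simp only [Walk.support_cons, Walk.support_nil, List.tail_cons, List.nodup_cons,
                List.mem_cons, List.mem_singleton, List.not_mem_nil, or_false, List.nodup_nil,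
                and_true] at hnd
              push_neg at hnd
              rintro ⟨a, b, H⟩
              simp only [Walk.edges_cons, Walk.edges_nil] at H
              exact key f P1 P2 h01 h12 h23 h34 (Ne.symm hnd.2.1.2) hnd.1.2.1 hnd.2.1.2 H

open Fin.NatCast in
lemma val_add_j (i : Fin (n+3)) (j : ℕ) : (i + (j : Fin (n+3))).val = (i.val + j) % (n+3) := by
  simp [Fin.add_def, Fin.val_natCast, Nat.add_mod_mod]

open Fin.NatCast in
lemma val_add_cases (i : Fin (n+3)) (j : ℕ) (hj : j ≤ n + 3) :
    ((i + (j:Fin (n+3))).val = i.val + j ∧ i.val + j < n+3) ∨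
    ((i + (j:Fin (n+3))).val + (n+3) = i.val + j) := by
  have h := val_add_j i j
  have hi := i.isLt
  by_cases hlt : i.val + j < n+3
  · left; rw [h, Nat.mod_eq_of_lt hlt]; exact ⟨rfl, hlt⟩
  · right; rw [h, Nat.mod_eq_sub_mod (by omega), Nat.mod_eq_of_lt (by omega)]; omega

open Fin.NatCast in
lemma vac1 (i : Fin (n+3)) :
    ((i + 1).val = i.val + 1 ∧ i.val + 1 < n+3) ∨ ((i+1).val + (n+3) = i.val + 1) := by
  have := val_add_cases i 1 (by omega); rwa [Nat.cast_one] at this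

open Fin.NatCast in
lemma vac2 (i : Fin (n+3)) :
    ((i + 2).val = i.val + 2 ∧ i.val + 2 < n+3) ∨ ((i+2).val + (n+3) = i.val + 2) := by
  have := val_add_cases i 2 (by omega); rwa [Nat.cast_two] at this

open Fin.NatCast in
lemma vac3 (i : Fin (n+3)) :
    ((i + 3).val = i.val + 3 ∧ i.val + 3 < n+3) ∨ ((i+3).val + (n+3) = i.val + 3) := by
  have := val_add_cases i 3 (by omega); rwa [Nat.cast_ofNat] at this

/-- pattern for k ≡ 0 mod 3 -/
def F1 (x : ℕ) : ℕ := x % 3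
/-- pattern for k ≡ 1 mod 3, k ≥ 7 : 0 1 2 1 (0 1 2)* -/
def F2 (x : ℕ) : ℕ := if x = 3 then 1 else if x < 3 then x else (x + 2) % 3
/-- pattern for k ≡ 2 mod 3, k ≥ 8 : 0 1 0 2 1 (0 1 2)* -/
def F3 (x : ℕ) : ℕ :=
  if x = 1 then 1 else if x = 3 then 2 else if x = 4 then 1 else if x < 5 then 0 else (x + 1) % 3

lemma F1lt (x : ℕ) : F1 x < 3 := by unfold F1; omega
lemma F2lt (x : ℕ) : F2 x < 3 := by unfold F2; split_ifs <;> omega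
lemma F3lt (x : ℕ) : F3 x < 3 := by unfold F3; split_ifs <;> omega

lemma F2spec (x : ℕ) :
    (x = 3 ∧ F2 x = 1) ∨ (x < 3 ∧ F2 x = x) ∨ (x ≠ 3 ∧ 3 ≤ x ∧ F2 x = (x+2) % 3) := by
  unfold F2; split_ifs <;> omega

lemma F3spec (x : ℕ) : (x = 0 ∧ F3 x = 0) ∨ (x = 1 ∧ F3 x = 1) ∨ (x = 2 ∧ F3 x = 0) ∨
    (x = 3 ∧ F3 x = 2) ∨ (x = 4 ∧ F3 x = 1) ∨ (5 ≤ x ∧ F3 x = (x+1) % 3) := by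
  unfold F3; split_ifs <;> omega

def fpat (F : ℕ → ℕ) (hF : ∀ x, F x < 3) : Fin (n+3) → Fin 3 := fun i => ⟨F i.val, hF _⟩

lemma good1 (hk : (n+3) % 3 = 0) :
    (∀ i : Fin (n+3), fpat F1 F1lt i ≠ fpat F1 F1lt (i+1)) ∧
    (∀ i : Fin (n+3), ¬(fpat F1 F1lt i = fpat F1 F1lt (i+2) ∧
      fpat F1 F1lt (i+1) = fpat F1 F1lt (i+3))) := by
  constructor
  · intro i h
    simp only [fpat, F1, Fin.mk.injEq] at h
    have hi := i.isLt
    rcases vac1 i with ⟨h1, h1'⟩ | h1 <;> omega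
  · rintro i ⟨h, -⟩
    simp only [fpat, F1, Fin.mk.injEq] at h
    have hi := i.isLt
    have h2i := (i+2).isLt
    rcases vac2 i with ⟨h1, h1'⟩ | h1 <;> omega

lemma good2 (hk : (n+3) % 3 = 1) (hk7 : 7 ≤ n+3) :
    (∀ i : Fin (n+3), fpat F2 F2lt i ≠ fpat F2 F2lt (i+1)) ∧
    (∀ i : Fin (n+3), ¬(fpat F2 F2lt i = fpat F2 F2lt (i+2) ∧
      fpat F2 F2lt (i+1) = fpat F2 F2lt (i+3))) := by
  constructor
  · intro i h
    simp only [fpat, Fin.mk.injEq] at h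
    have hi := i.isLt
    have h1i := (i+1).isLt
    have s0 := F2spec i.val
    have s1 := F2spec ((i+1).val)
    have v1 := vac1 i
    omega
  · rintro i ⟨hA, hB⟩
    simp only [fpat, Fin.mk.injEq] at hA hB
    have hi := i.isLt
    have h1i := (i+1).isLt
    have h2i := (i+2).isLt
    have h3i := (i+3).isLt
    have s0 := F2spec i.val
    have s1 := F2spec ((i+1).val)
    have s2 := F2spec ((i+2).val)
    have s3 := F2spec ((i+3).val)
    have v1 := vac1 i
    have v2 := vac2 i
    have v3 := vac3 i
    omega

lemma good3 (hk : (n+3) % 3 = 2) (hk8 : 8 ≤ n+3) :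
    (∀ i : Fin (n+3), fpat F3 F3lt i ≠ fpat F3 F3lt (i+1)) ∧
    (∀ i : Fin (n+3), ¬(fpat F3 F3lt i = fpat F3 F3lt (i+2) ∧
      fpat F3 F3lt (i+1) = fpat F3 F3lt (i+3))) := by
  constructor
  · intro i h
    simp only [fpat, Fin.mk.injEq] at h
    have hi := i.isLt
    have h1i := (i+1).isLt
    have s0 := F3spec i.val
    have s1 := F3spec ((i+1).val)
    have v1 := vac1 i
    omega
  · rintro i ⟨hA, hB⟩
    simp only [fpat, Fin.mk.injEq] at hA hB
    have hi := i.isLt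
    have h1i := (i+1).isLt
    have h2i := (i+2).isLt
    have h3i := (i+3).isLt
    have s0 := F3spec i.val
    have s1 := F3spec ((i+1).val)
    have s2 := F3spec ((i+2).val)
    have s3 := F3spec ((i+3).val)
    have v1 := vac1 i
    have v2 := vac2 i
    have v3 := vac3 i
    omega

set_option maxRecDepth 100000 in
lemma fin5_adj : ∀ x : Fin 5, (cycleGraph 5).Adj x (x+1) := by decide

set_option maxRecDepth 100000 in
lemma fin5_nodup : ∀ x : Fin 5, ([x, x+1, x+1+1, x+1+1+1, x+1+1+1+1] : List (Fin 5)).Nodup := by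
  decide

set_option maxRecDepth 100000 in
lemma fin5_edge_ne : ∀ x : Fin 5, s(x, x+1) ≠ s(x+1, x+1+1) := by decide

set_option maxRecDepth 100000 in
lemma fin5_mem : ∀ x : Fin 5, (x+1) ∈ s(x, x+1) ∧ (x+1) ∈ s(x+1, x+1+1) := by decide

set_option maxRecDepth 100000 in
lemma pigeon5 : ∀ g : Fin 5 → Fin 3, (∀ i, g i ≠ g (i+1)) →
    ∃ i, g (i+1) = g (i+1+1+1) ∧ g (i+1+1) = g (i+1+1+1+1) := by decide

lemma noC5 {m : ℕ} (hm : m ≤ 3) :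
    ¬ ∃ c : Sym2 (Fin 5) → Fin m, IsStarEdgeColoring (cycleGraph 5) c := by
  rintro ⟨c, hc1, hc2, -⟩
  have gprop : ∀ i : Fin 5, c s(i,i+1) ≠ c s(i+1,i+1+1) :=
    fun i => hc1 _ ((cycleGraph 5).mem_edgeSet.mpr (fin5_adj i)) _
      ((cycleGraph 5).mem_edgeSet.mpr (fin5_adj (i+1))) (fin5_edge_ne i)
      ⟨i+1, (fin5_mem i).1, (fin5_mem i).2⟩
  obtain ⟨i, hA, hB⟩ := pigeon5 (fun j => Fin.castLE hm (c s(j, j+1)))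
    (fun j h => gprop j (Fin.castLE_inj.mp h))
  have hA' : c s(i+1, i+1+1) = c s(i+1+1+1, i+1+1+1+1) := Fin.castLE_inj.mp hA
  have hB' : c s(i+1+1, i+1+1+1) = c s(i+1+1+1+1, i+1+1+1+1+1) := Fin.castLE_inj.mp hB
  set v := i + 1 with hv
  let p : (cycleGraph 5).Walk v (v+1+1+1+1) :=
    .cons (fin5_adj v) (.cons (fin5_adj (v+1)) (.cons (fin5_adj (v+1+1))
      (.cons (fin5_adj (v+1+1+1)) .nil)))
  have hpath : p.IsPath := by
    rw [Walk.isPath_def]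
    simpa [p, Walk.support_cons] using fin5_nodup v
  refine hc2 v _ p hpath (by simp [p]) ⟨c s(v, v+1), c s(v+1, v+1+1), ?_⟩
  intro e he
  simp only [p, Walk.edges_cons, Walk.edges_nil, List.mem_cons, List.not_mem_nil, or_false] at he
  rcases he with rfl | rfl | rfl | rfl
  · exact Or.inl rfl
  · exact Or.inr rfl
  · exact Or.inl hA'.symm
  · exact Or.inr hB'.symm

end Aux

/-- the cycle C_k admits a star 3-edge-coloring iff k ≠ 5
(for k ≥ 3), and χ'_s(C₅) = 4. -/
theorem cycle_star_three_coloring_iff :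
    (∀ k : ℕ, 3 ≤ k →
      ((∃ c : Sym2 (Fin k) → Fin 3, IsStarEdgeColoring (SimpleGraph.cycleGraph k) c) ↔
        k ≠ 5)) ∧
    starChromaticIndex (SimpleGraph.cycleGraph 5) = 4 := by
  constructor
  · intro k hk
    constructor
    · rintro ⟨c, hc⟩ rfl
      exact noC5 le_rfl ⟨c, hc⟩
    · intro hk5
      obtain ⟨nn, rfl⟩ : ∃ nn, k = nn + 3 := ⟨k - 3, by omega⟩
      have hcases : (nn+3) % 3 = 0 ∨ ((nn+3) % 3 = 1 ∧ nn = 1) ∨ ((nn+3) % 3 = 1 ∧ 7 ≤ nn+3) ∨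
          ((nn+3) % 3 = 2 ∧ 8 ≤ nn+3) := by omega
      rcases hcases with h | ⟨h, rfl⟩ | ⟨h, h7⟩ | ⟨h, h8⟩
      · exact ⟨ec (fpat F1 F1lt), exists_coloring _ (good1 h).1 (good1 h).2⟩
      · refine ⟨ec (![0,1,0,2] : Fin 4 → Fin 3), exists_coloring _ ?_ ?_⟩
        · decide
        · decide
      · exact ⟨ec (fpat F2 F2lt), exists_coloring _ (good2 h h7).1 (good2 h h7).2⟩
      · exact ⟨ec (fpat F3 F3lt), exists_coloring _ (good3 h h8).1 (good3 h h8).2⟩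
  · have h4 : 4 ∈ {k | ∃ c : Sym2 (Fin 5) → Fin k,
        IsStarEdgeColoring (SimpleGraph.cycleGraph 5) c} := by
      refine ⟨ec (n := 2) (![0,1,0,2,3] : Fin 5 → Fin 4), exists_coloring _ ?_ ?_⟩
      · decide
      · decide
    refine le_antisymm (Nat.sInf_le h4) (le_csInf ⟨4, h4⟩ ?_)
    intro m hm
    by_contra hlt
    exact noC5 (by omega) hm
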